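/- The point (219, 1296) is a rational torsion point of order exactly 7 on the elliptic curve y² = x³ − 182763x + 31201254 over ℚ. -/

import Mathlib

/-- The elliptic curve `y² = x³ + (-182763)x + (31201254)` over `ℚ` (Cremona label 294b2). -/
def E294b2 : WeierstrassCurve.Affine ℚ :=
  { a₁ := 0, a₂ := 0, a₃ := 0, a₄ := -182763, a₆ := 31201254 }

open WeierstrassCurve.Affine WeierstrassCurve.Affine.Point

lemma some_eq_some' {W : WeierstrassCurve.Affine ℚ} {x₁ y₁ x₂ y₂ : ℚ}
    (hx : x₁ = x₂) (hy : y₁ = y₂) (h₁ : W.Nonsingular x₁ y₁) (h₂ : W.Nonsingular x₂ y₂) :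
    Point.some _ _ h₁ = Point.some _ _ h₂ := by
  subst hx; subst hy; rfl

lemma ns294 {x y : ℚ} (h : y ^ 2 = x ^ 3 - 182763 * x + 31201254)
    (h' : y ≠ 0) : E294b2.Nonsingular x y := by
  rw [nonsingular_iff, equation_iff]
  refine ⟨by simp only [E294b2]; linarith, Or.inr ?_⟩
  simp only [E294b2]
  intro hc
  apply h'
  linarith

lemma hP : E294b2.Nonsingular 219 1296 := ns294 (by norm_num) (by norm_num)
lemma hP2 : E294b2.Nonsingular (-213) (-7776) := ns294 (by norm_num) (by norm_num)
lemma hP3 : E294b2.Nonsingular 435 (-5832) := ns294 (by norm_num) (by norm_num)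
lemma hP4 : E294b2.Nonsingular 435 5832 := ns294 (by norm_num) (by norm_num)
lemma hP5 : E294b2.Nonsingular (-213) 7776 := ns294 (by norm_num) (by norm_num)
lemma hP6 : E294b2.Nonsingular 219 (-1296) := ns294 (by norm_num) (by norm_num)

lemma negY_eval (x y : ℚ) : E294b2.negY x y = -y := by
  simp [WeierstrassCurve.Affine.negY, E294b2]

lemma step2 : Point.some _ _ hP + Point.some _ _ hP = Point.some _ _ hP2 := by
  rw [add_of_Y_ne (by rw [negY_eval]; norm_num)]
  apply some_eq_some' <;>
    rw [slope_of_Y_ne rfl (by rw [negY_eval]; norm_num)] <;>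
    simp [WeierstrassCurve.Affine.addX, WeierstrassCurve.Affine.addY,
      WeierstrassCurve.Affine.negAddY, WeierstrassCurve.Affine.negY, E294b2] <;> norm_num

lemma stepX {x₁ y₁ x₂ y₂ x₃ y₃ : ℚ} (h₁ : E294b2.Nonsingular x₁ y₁)
    (h₂ : E294b2.Nonsingular x₂ y₂) (h₃ : E294b2.Nonsingular x₃ y₃)
    (hx : x₁ ≠ x₂)
    (hX : E294b2.addX x₁ x₂ ((y₁ - y₂) / (x₁ - x₂)) = x₃)
    (hY : E294b2.addY x₁ x₂ y₁ ((y₁ - y₂) / (x₁ - x₂)) = y₃) :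
    Point.some _ _ h₁ + Point.some _ _ h₂ = Point.some _ _ h₃ := by
  rw [add_of_X_ne hx]
  exact some_eq_some' (by rw [slope_of_X_ne hx, hX]) (by rw [slope_of_X_ne hx, hY]) _ _

lemma step3 : Point.some _ _ hP2 + Point.some _ _ hP = Point.some _ _ hP3 := by
  apply stepX _ _ _ (by norm_num) <;>
    simp [WeierstrassCurve.Affine.addX, WeierstrassCurve.Affine.addY,
      WeierstrassCurve.Affine.negAddY, WeierstrassCurve.Affine.negY, E294b2] <;> norm_num

lemma step4 : Point.some _ _ hP3 + Point.some _ _ hP = Point.some _ _ hP4 := by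
  apply stepX _ _ _ (by norm_num) <;>
    simp [WeierstrassCurve.Affine.addX, WeierstrassCurve.Affine.addY,
      WeierstrassCurve.Affine.negAddY, WeierstrassCurve.Affine.negY, E294b2] <;> norm_num

lemma step5 : Point.some _ _ hP4 + Point.some _ _ hP = Point.some _ _ hP5 := by
  apply stepX _ _ _ (by norm_num) <;>
    simp [WeierstrassCurve.Affine.addX, WeierstrassCurve.Affine.addY,
      WeierstrassCurve.Affine.negAddY, WeierstrassCurve.Affine.negY, E294b2] <;> norm_num

lemma step6 : Point.some _ _ hP5 + Point.some _ _ hP = Point.some _ _ hP6 := by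
  apply stepX _ _ _ (by norm_num) <;>
    simp [WeierstrassCurve.Affine.addX, WeierstrassCurve.Affine.addY,
      WeierstrassCurve.Affine.negAddY, WeierstrassCurve.Affine.negY, E294b2] <;> norm_num

lemma step7 : Point.some _ _ hP6 + Point.some _ _ hP = 0 :=
  add_of_Y_eq rfl (by rw [negY_eval])

/-- The point `(219, 1296)` is a rational torsion point of order exactly `7` on the
elliptic curve `y² = x³ + (-182763)x + (31201254)` over `ℚ`. -/
theorem order_point_294b2 :
    ∃ h : E294b2.Nonsingular (219) (1296),
      addOrderOf (WeierstrassCurve.Affine.Point.some _ _ h) = 7 := by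
  refine ⟨hP, ?_⟩
  have h7 : (7 : ℕ) • Point.some _ _ hP = 0 := by
    have : (7 : ℕ) • Point.some _ _ hP =
        Point.some _ _ hP + Point.some _ _ hP + Point.some _ _ hP + Point.some _ _ hP + Point.some _ _ hP +
          Point.some _ _ hP + Point.some _ _ hP := by
      rw [show (7 : ℕ) = 1 + 1 + 1 + 1 + 1 + 1 + 1 from rfl]
      simp only [add_nsmul, one_nsmul]
    rw [this, step2, step3, step4, step5, step6, step7]
  have : Fact (Nat.Prime 7) := ⟨by norm_num⟩
  exact addOrderOf_eq_prime h7 (some_ne_zero hP)
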